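/- The Apéry set of S is β-rectangular (Ap(S) = B) if and only if m = Π_{i=2}^ν (β_i + 1). -/

import Mathlib

open Finset

/-- `S` is a numerical semigroup: a submonoid of `(ℕ, +)` with finite complement. -/
def IsNumSgp (S : Set ℕ) : Prop :=
  0 ∈ S ∧ (∀ a ∈ S, ∀ b ∈ S, a + b ∈ S) ∧ (Sᶜ : Set ℕ).Finite

/-- `s` belongs to the Apéry set of `S` with respect to `m`:
`s ∈ S` and `s - m ∉ S` (i.e. no `u ∈ S` with `u + m = s`). -/
def InApery (S : Set ℕ) (m s : ℕ) : Prop :=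
  s ∈ S ∧ ∀ u ∈ S, u + m ≠ s

def AperySet (S : Set ℕ) (m : ℕ) : Set ℕ := {s | InApery S m s}

/-- `ordS S s` is the largest `h` such that `s` is a sum of `h` nonzero elements of `S`. -/
noncomputable def ordS (S : Set ℕ) (s : ℕ) : ℕ :=
  sSup {h : ℕ | ∃ f : Fin h → ℕ, (∀ j, f j ∈ S ∧ f j ≠ 0) ∧ ∑ j, f j = s}

/-- `g` generates `S`. -/
def Generates (S : Set ℕ) {ν : ℕ} (g : Fin ν → ℕ) : Prop :=
  ∀ s, s ∈ S ↔ ∃ lam : Fin ν → ℕ, ∑ i, lam i * g i = s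

/-- `g` is a minimal generating system of `S`: it generates `S`
and no `g i` is generated by the remaining generators. -/
def MinimalGen (S : Set ℕ) {ν : ℕ} (g : Fin ν → ℕ) : Prop :=
  Generates S g ∧ ∀ i, ¬ ∃ lam : Fin ν → ℕ, lam i = 0 ∧ ∑ j, lam j * g j = g i

/-- `lam` is a maximal representation of `s`: the coefficient sum equals `ordS S s`. -/
def IsMaxRep (S : Set ℕ) {ν : ℕ} (g : Fin ν → ℕ) (lam : Fin ν → ℕ) (s : ℕ) : Prop :=
  ∑ i, lam i * g i = s ∧ ∑ i, lam i = ordS S s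

/-- `s` has a unique maximal representation. -/
def UniqueMaxRep (S : Set ℕ) {ν : ℕ} (g : Fin ν → ℕ) (s : ℕ) : Prop :=
  ∃! lam : Fin ν → ℕ, IsMaxRep S g lam s

/-- `β_i = max {h | h g_i ∈ Ap(S) and ord(h g_i) = h}`. -/
noncomputable def betaN (S : Set ℕ) (m : ℕ) {ν : ℕ} (g : Fin ν → ℕ) (i : Fin ν) : ℕ :=
  sSup {h : ℕ | InApery S m (h * g i) ∧ ordS S (h * g i) = h}

/-- `γ_i = max {h | h g_i ∈ Ap(S), ord(h g_i) = h and h g_i has a unique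
maximal representation}`. -/
noncomputable def gammaN (S : Set ℕ) (m : ℕ) {ν : ℕ} (g : Fin ν → ℕ) (i : Fin ν) : ℕ :=
  sSup {h : ℕ | InApery S m (h * g i) ∧ ordS S (h * g i) = h ∧ UniqueMaxRep S g (h * g i)}

/-- `B = {Σ_{i≥2} λ_i g_i : 0 ≤ λ_i ≤ β_i}`. -/
def Bset (S : Set ℕ) (m : ℕ) {ν : ℕ} [NeZero ν] (g : Fin ν → ℕ) : Set ℕ :=
  {s | ∃ lam : Fin ν → ℕ, lam 0 = 0 ∧ (∀ i, lam i ≤ betaN S m g i) ∧ ∑ i, lam i * g i = s}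

/-- `Γ = {Σ_{i≥2} λ_i g_i : 0 ≤ λ_i ≤ γ_i}`. -/
def GammaSet (S : Set ℕ) (m : ℕ) {ν : ℕ} [NeZero ν] (g : Fin ν → ℕ) : Set ℕ :=
  {s | ∃ lam : Fin ν → ℕ, lam 0 = 0 ∧ (∀ i, lam i ≤ gammaN S m g i) ∧ ∑ i, lam i * g i = s}

/-- `s ⪯_M t`. -/
def predM (S : Set ℕ) (s t : ℕ) : Prop :=
  ∃ u ∈ S, s + u = t ∧ ordS S s + ordS S u = ordS S t

def ordSet (S : Set ℕ) (s : ℕ) : Set ℕ :=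
  {h : ℕ | ∃ f : Fin h → ℕ, (∀ j, f j ∈ S ∧ f j ≠ 0) ∧ ∑ j, f j = s}

lemma ordSet_le {S : Set ℕ} {s h : ℕ} (hh : h ∈ ordSet S s) : h ≤ s := by
  obtain ⟨f, hf, hsum⟩ := hh
  calc h = ∑ _j : Fin h, 1 := by simp
  _ ≤ ∑ j, f j := Finset.sum_le_sum fun j _ => Nat.one_le_iff_ne_zero.2 (hf j).2
  _ = s := hsum

lemma ordSet_bdd (S : Set ℕ) (s : ℕ) : BddAbove (ordSet S s) :=
  ⟨s, fun _ hh => ordSet_le hh⟩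

lemma ordSet_nonempty {S : Set ℕ} {s : ℕ} (hs : s ∈ S) : (ordSet S s).Nonempty := by
  rcases eq_or_ne s 0 with rfl | h0
  · exact ⟨0, Fin.elim0, fun j => j.elim0, by simp⟩
  · exact ⟨1, fun _ => s, fun _ => ⟨hs, h0⟩, by simp⟩

lemma ordS_mem {S : Set ℕ} {s : ℕ} (hs : s ∈ S) : ordS S s ∈ ordSet S s :=
  Nat.sSup_mem (ordSet_nonempty hs) (ordSet_bdd S s)

lemma le_ordS {S : Set ℕ} {s h : ℕ} (hh : h ∈ ordSet S s) : h ≤ ordS S s :=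
  le_csSup (ordSet_bdd S s) hh

lemma ordS_superadd {S : Set ℕ} {a b : ℕ} (ha : a ∈ S) (hb : b ∈ S) :
    ordS S a + ordS S b ≤ ordS S (a + b) := by
  obtain ⟨f, hf, hfs⟩ := ordS_mem ha
  obtain ⟨f', hf', hfs'⟩ := ordS_mem hb
  refine le_ordS ⟨Fin.append f f', ?_, ?_⟩
  · intro j
    refine Fin.addCases (fun i => ?_) (fun i => ?_) j
    · rw [Fin.append_left]; exact hf i
    · rw [Fin.append_right]; exact hf' i
  · rw [Fin.sum_univ_add]
    simp [Fin.append_left, Fin.append_right, hfs, hfs']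

section gen
variable {S : Set ℕ} {ν : ℕ} {g : Fin ν → ℕ}

lemma mem_of_gen (hgen : Generates S g) (lam : Fin ν → ℕ) : ∑ i, lam i * g i ∈ S :=
  (hgen _).2 ⟨lam, rfl⟩

lemma gen_mem (hgen : Generates S g) (i : Fin ν) : g i ∈ S := by
  have := mem_of_gen hgen (fun j => if j = i then 1 else 0)
  simpa using this

lemma one_le_ordS {s : ℕ} (hs : s ∈ S) (h0 : s ≠ 0) : 1 ≤ ordS S s :=
  le_ordS ⟨fun _ => s, fun _ => ⟨hs, h0⟩, by simp⟩

lemma sum_le_ordS (hgen : Generates S g) (hg0 : ∀ i, g i ≠ 0) (lam : Fin ν → ℕ) :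
    ∑ i, lam i ≤ ordS S (∑ i, lam i * g i) := by
  set n := ∑ i, lam i with hn
  clear_value n
  induction n generalizing lam with
  | zero => exact Nat.zero_le _
  | succ n ih =>
    have hex : ∃ i, lam i ≠ 0 := by
      by_contra h
      push_neg at h
      simp [Finset.sum_eq_zero (fun i _ => h i)] at hn
    obtain ⟨i, hi⟩ := hex
    set lam' : Fin ν → ℕ := Function.update lam i (lam i - 1) with hlam'
    have h4 : lam' i = lam i - 1 := by simp [hlam']
    have heq : ∑ j ∈ Finset.univ.erase i, lam' j = ∑ j ∈ Finset.univ.erase i, lam j :=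
      Finset.sum_congr rfl fun j hj =>
        by simp [hlam', Function.update_of_ne (Finset.ne_of_mem_erase hj)]
    have h1 : lam' i + ∑ j ∈ Finset.univ.erase i, lam' j = ∑ j, lam' j :=
      Finset.add_sum_erase _ _ (Finset.mem_univ i)
    have h1' : lam i + ∑ j ∈ Finset.univ.erase i, lam j = ∑ j, lam j :=
      Finset.add_sum_erase _ _ (Finset.mem_univ i)
    have hsum' : n = ∑ j, lam' j := by omega
    have hdecomp : ∑ j, lam j * g j = g i + ∑ j, lam' j * g j := by
      rw [← Finset.add_sum_erase _ (fun j => lam' j * g j) (Finset.mem_univ i),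
          ← Finset.add_sum_erase _ (fun j => lam j * g j) (Finset.mem_univ i)]
      have h2 : ∑ j ∈ Finset.univ.erase i, lam' j * g j
          = ∑ j ∈ Finset.univ.erase i, lam j * g j :=
        Finset.sum_congr rfl fun j hj =>
          by simp [hlam', Function.update_of_ne (Finset.ne_of_mem_erase hj)]
      have h3 : lam i * g i = g i + lam' i * g i := by
        obtain ⟨k, hk⟩ : ∃ k, lam i = k + 1 := ⟨lam i - 1, by omega⟩
        rw [h4, hk, Nat.add_sub_cancel]; ring
      omega
    have key : n + 1 ≤ ordS S (g i + ∑ j, lam' j * g j) :=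
      calc n + 1 = 1 + n := by omega
      _ ≤ ordS S (g i) + ordS S (∑ j, lam' j * g j) :=
          Nat.add_le_add (one_le_ordS (gen_mem hgen i) (hg0 i)) (hsum' ▸ ih lam' hsum')
      _ ≤ ordS S (g i + ∑ j, lam' j * g j) :=
          ordS_superadd (gen_mem hgen i) (mem_of_gen hgen lam')
    rw [hdecomp]
    exact key

lemma exists_maxRep (hgen : Generates S g) (hg0 : ∀ i, g i ≠ 0) {s : ℕ} (hs : s ∈ S) :
    ∃ lam : Fin ν → ℕ, ∑ i, lam i * g i = s ∧ ∑ i, lam i = ordS S s := by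
  obtain ⟨f, hf, hfs⟩ := ordS_mem hs
  choose lamf hlamf using fun j => (hgen (f j)).1 (hf j).1
  have key : ∑ i, (∑ j, lamf j i) * g i = s := by
    calc ∑ i, (∑ j, lamf j i) * g i = ∑ i, ∑ j, lamf j i * g i :=
        Finset.sum_congr rfl fun i _ => Finset.sum_mul _ _ _
    _ = ∑ j, ∑ i, lamf j i * g i := Finset.sum_comm
    _ = ∑ j, f j := Finset.sum_congr rfl fun j _ => hlamf j
    _ = s := hfs
  refine ⟨fun i => ∑ j, lamf j i, key, ?_⟩
  have hub : ∑ i, (∑ j, lamf j i) ≤ ordS S s := by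
    have := sum_le_ordS hgen hg0 (fun i => ∑ j, lamf j i)
    rwa [key] at this
  have hlb : ordS S s ≤ ∑ i, (∑ j, lamf j i) := by
    rw [Finset.sum_comm]
    calc ordS S s = ∑ _j : Fin (ordS S s), 1 := by simp
    _ ≤ ∑ j, ∑ i, lamf j i := by
      refine Finset.sum_le_sum fun j _ => ?_
      by_contra h
      push_neg at h
      have hz : ∀ i, lamf j i = 0 := fun i =>
        Finset.sum_eq_zero_iff.mp (Nat.lt_one_iff.mp h) i (Finset.mem_univ i)
      exact (hf j).2 (by rw [← hlamf j]; simp [hz])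
  exact le_antisymm hub hlb

end gen

section ap
variable {S : Set ℕ} {ν : ℕ} {g : Fin ν → ℕ}

lemma apery_summand (hS : IsNumSgp S) {m s a b : ℕ} (hs : InApery S m s) (ha : a ∈ S)
    (hb : b ∈ S) (hab : a + b = s) : InApery S m a := by
  refine ⟨ha, fun u hu hum => ?_⟩
  have : (u + b) + m = s := by omega
  exact hs.2 (u + b) (hS.2.1 u hu b hb) this

lemma sum_split (g : Fin ν → ℕ) {tau lam : Fin ν → ℕ} (hle : ∀ i, tau i ≤ lam i) :
    ∑ i, tau i * g i + ∑ i, (lam i - tau i) * g i = ∑ i, lam i * g i := by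
  rw [← Finset.sum_add_distrib]
  refine Finset.sum_congr rfl fun i _ => ?_
  have := hle i
  rw [← Nat.add_mul]
  congr 1
  omega

lemma subsum_ord (hgen : Generates S g) (hg0 : ∀ i, g i ≠ 0) {lam tau : Fin ν → ℕ} {s : ℕ}
    (hrep : ∑ i, lam i * g i = s) (hmax : ∑ i, lam i = ordS S s) (hle : ∀ i, tau i ≤ lam i) :
    ordS S (∑ i, tau i * g i) = ∑ i, tau i := by
  have huv : ∑ i, tau i * g i + ∑ i, (lam i - tau i) * g i = s := by
    rw [sum_split g hle, hrep]
  have h1 : ∑ i, tau i ≤ ordS S (∑ i, tau i * g i) := sum_le_ordS hgen hg0 tau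
  have h2 : ∑ i, (lam i - tau i) ≤ ordS S (∑ i, (lam i - tau i) * g i) :=
    sum_le_ordS hgen hg0 _
  have h3 : ordS S (∑ i, tau i * g i) + ordS S (∑ i, (lam i - tau i) * g i) ≤ ordS S s :=
    huv ▸ ordS_superadd (mem_of_gen hgen tau) (mem_of_gen hgen _)
  have h4 : ∑ i, tau i + ∑ i, (lam i - tau i) = ∑ i, lam i := by
    rw [← Finset.sum_add_distrib]
    exact Finset.sum_congr rfl fun i _ => by have := hle i; omega
  omega

lemma apery_finite (hS : IsNumSgp S) (m : ℕ) (hm : 0 < m) (hmul : ∀ s ∈ S, s ≠ 0 → m ≤ s) :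
    (AperySet S m).Finite := by
  have hsub : AperySet S m ⊆ insert 0 ((fun x => x + m) '' Sᶜ) := by
    intro a ha
    rcases eq_or_ne a 0 with rfl | h0
    · exact Set.mem_insert _ _
    · right
      have hma := hmul a ha.1 h0
      refine ⟨a - m, fun hc => ?_, by simp; omega⟩
      exact ha.2 (a - m) hc (by omega)
  exact Set.Finite.subset ((hS.2.2.image _).insert 0) hsub

lemma beta_bddAbove (hS : IsNumSgp S) {m : ℕ} (hm : 0 < m) (hmul : ∀ s ∈ S, s ≠ 0 → m ≤ s)
    (i : Fin ν) (hgi : g i ≠ 0) :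
    BddAbove {h : ℕ | InApery S m (h * g i) ∧ ordS S (h * g i) = h} := by
  obtain ⟨C, hC⟩ := (apery_finite hS m hm hmul).bddAbove
  refine ⟨C, fun h hh => ?_⟩
  rcases Nat.eq_zero_or_pos h with rfl | hpos
  · have : (0 : ℕ) ∈ AperySet S m := by simpa [AperySet] using hh.1
    simpa using hC this
  · have h1 : h ≤ h * g i := Nat.le_mul_of_pos_right h (Nat.pos_of_ne_zero hgi)
    have h2 : h * g i ≤ C := hC hh.1
    omega

lemma mem_beta_le (hS : IsNumSgp S) {m : ℕ} (hm : 0 < m) (hmul : ∀ s ∈ S, s ≠ 0 → m ≤ s)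
    {i : Fin ν} (hgi : g i ≠ 0) {h : ℕ}
    (hh : InApery S m (h * g i) ∧ ordS S (h * g i) = h) : h ≤ betaN S m g i :=
  le_csSup (beta_bddAbove hS hm hmul i hgi) hh

lemma maxRep_coord_le_beta [NeZero ν] (hS : IsNumSgp S) (hgen : Generates S g) (hg0 : ∀ i, g i ≠ 0)
    (hm : 0 < g 0) (hmul : ∀ s ∈ S, s ≠ 0 → g 0 ≤ s) {s : ℕ} (hs : InApery S (g 0) s)
    {lam : Fin ν → ℕ} (hrep : ∑ i, lam i * g i = s) (hmax : ∑ i, lam i = ordS S s)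
    (i : Fin ν) : lam i ≤ betaN S (g 0) g i := by
  set tau : Fin ν → ℕ := fun j => if j = i then lam i else 0 with htau
  have htle : ∀ j, tau j ≤ lam j := fun j => by
    by_cases hj : j = i <;> simp [htau, hj]
  have htsum : ∑ j, tau j = lam i := by simp [htau]
  have htg : ∑ j, tau j * g j = lam i * g i := by
    rw [htau, Finset.sum_eq_single i (fun b _ hb => by simp [hb])
      (fun h => absurd (Finset.mem_univ i) h)]
    simp
  have hord : ordS S (lam i * g i) = lam i := by
    have := subsum_ord hgen hg0 hrep hmax htle
    rwa [htg, htsum] at this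
  have hap : InApery S (g 0) (lam i * g i) := by
    refine apery_summand hS hs ?_ (mem_of_gen hgen (fun j => lam j - tau j)) ?_
    · rw [← htg]; exact mem_of_gen hgen tau
    · rw [← htg, sum_split g htle, hrep]
  exact mem_beta_le hS hm hmul (hg0 i) ⟨hap, hord⟩

lemma lemmaA (hS : IsNumSgp S) (hgen : Generates S g) (hg0 : ∀ i, g i ≠ 0) [NeZero ν]
    (hm : 0 < g 0) (hmul : ∀ s ∈ S, s ≠ 0 → g 0 ≤ s) {s : ℕ} (hs : InApery S (g 0) s) :
    ∃ lam : Fin ν → ℕ, lam 0 = 0 ∧ (∀ i, lam i ≤ betaN S (g 0) g i) ∧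
      ∑ i, lam i * g i = s ∧ ∑ i, lam i = ordS S s := by
  obtain ⟨lam, hrep, hmax⟩ := exists_maxRep hgen hg0 hs.1
  have hzero : lam 0 = 0 := by
    by_contra h0
    set lam' : Fin ν → ℕ := Function.update lam 0 (lam 0 - 1) with hlam'
    have hmem : ∑ i, lam' i * g i ∈ S := mem_of_gen hgen lam'
    refine hs.2 _ hmem ?_
    rw [← hrep]
    rw [← Finset.add_sum_erase _ (fun j => lam' j * g j) (Finset.mem_univ 0),
        ← Finset.add_sum_erase _ (fun j => lam j * g j) (Finset.mem_univ 0)]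
    have h2 : ∑ j ∈ Finset.univ.erase 0, lam' j * g j
        = ∑ j ∈ Finset.univ.erase 0, lam j * g j :=
      Finset.sum_congr rfl fun j hj =>
        by simp [hlam', Function.update_of_ne (Finset.ne_of_mem_erase hj)]
    have h3 : lam' 0 * g 0 + g 0 = lam 0 * g 0 := by
      have h4 : lam' 0 = lam 0 - 1 := by simp [hlam']
      obtain ⟨k, hk⟩ : ∃ k, lam 0 = k + 1 := ⟨lam 0 - 1, by omega⟩
      rw [h4, hk, Nat.add_sub_cancel]; ring
    omega
  exact ⟨lam, hzero, fun i => maxRep_coord_le_beta hS hgen hg0 hm hmul hs hrep hmax i,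
    hrep, hmax⟩

end ap

section card
variable {S : Set ℕ}

lemma exists_mod (hS : IsNumSgp S) {m : ℕ} (hm : 0 < m) (r : ℕ) :
    ∃ s, s ∈ S ∧ s % m = r % m := by
  obtain ⟨N, hN⟩ := hS.2.2.bddAbove
  refine ⟨r % m + m * (N + 1), ?_, by simp [Nat.add_mul_mod_self_left]⟩
  by_contra h
  have h1 := hN h
  have h2 : N + 1 ≤ m * (N + 1) := Nat.le_mul_of_pos_left _ hm
  try simp only [upperBounds, Set.mem_setOf_eq] at h1
  omega

lemma mul_mem (hS : IsNumSgp S) {m : ℕ} (hmS : m ∈ S) (k : ℕ) : m * k ∈ S := by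
  induction k with
  | zero => simpa using hS.1
  | succ k ih => rw [Nat.mul_succ]; exact hS.2.1 _ ih _ hmS

lemma apery_ncard (hS : IsNumSgp S) {m : ℕ} (hm : 0 < m) (hmS : m ∈ S) :
    (AperySet S m).ncard = m := by
  classical
  have hex : ∀ r : ℕ, ∃ s, s ∈ S ∧ s % m = r % m := exists_mod hS hm
  set a : ℕ → ℕ := fun r => Nat.find (hex r) with ha
  have haS : ∀ r, a r ∈ S := fun r => (Nat.find_spec (hex r)).1
  have hamod : ∀ r, a r % m = r % m := fun r => (Nat.find_spec (hex r)).2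
  have hmin : ∀ r, ∀ u, u ∈ S → u % m = r % m → a r ≤ u := fun r u hu hum =>
    Nat.find_min' (hex r) ⟨hu, hum⟩
  have hAp : AperySet S m = a '' Set.Iio m := by
    ext s
    constructor
    · intro hs
      refine ⟨s % m, Nat.mod_lt _ hm, ?_⟩
      have h1 : a (s % m) ≤ s := hmin _ s hs.1 (by simp [Nat.mod_mod_of_dvd])
      rcases eq_or_lt_of_le h1 with heq | hlt
      · exact heq
      · exfalso
        have hmod : a (s % m) % m = s % m := by
          exact (hamod _).trans (Nat.mod_mod_of_dvd s dvd_rfl)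
        have hdvd : m ∣ s - a (s % m) := (Nat.modEq_iff_dvd' h1).mp hmod
        obtain ⟨k, hk⟩ := hdvd
        obtain ⟨k', rfl⟩ : ∃ k', k = k' + 1 := by
          refine ⟨k - 1, ?_⟩
          rcases Nat.eq_zero_or_pos k with rfl | hkpos
          · simp at hk; omega
          · omega
        rw [Nat.mul_succ] at hk
        have hsm : s - m = a (s % m) + m * k' := by omega
        have hsmS : s - m ∈ S := hsm ▸ hS.2.1 _ (haS _) _ (mul_mem hS hmS k')
        exact hs.2 (s - m) hsmS (by omega)
    · rintro ⟨r, hr, rfl⟩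
      refine ⟨haS r, fun u hu hum => ?_⟩
      have h1 : u % m = r % m := by
        rw [← hamod r, ← hum]
        simp [Nat.add_mod_right]
      have := hmin r u hu h1
      omega
  have hinj : Set.InjOn a (Set.Iio m) := by
    intro r1 h1 r2 h2 hae
    have := hamod r1
    rw [hae, hamod r2] at this
    rw [Nat.mod_eq_of_lt h1, Nat.mod_eq_of_lt h2] at this
    omega
  rw [hAp, Set.ncard_image_of_injOn hinj, ← Finset.coe_Iio, Set.ncard_coe_finset,
    Nat.card_Iio]

end card

theorem betaRect_iff_mult_eq_prod (S : Set ℕ) {ν : ℕ} [NeZero ν] (g : Fin ν → ℕ) (hν : 2 ≤ ν)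
    (hS : IsNumSgp S) (hgen : MinimalGen S g) (hmono : StrictMono g)
    (hmpos : 0 < g 0) (hmul : ∀ s ∈ S, s ≠ 0 → g 0 ≤ s) :
    AperySet S (g 0) = Bset S (g 0) g ↔
      g 0 = ∏ i ∈ Finset.univ.erase 0, (betaN S (g 0) g i + 1) := by
  classical
  obtain ⟨hgen, hmingen⟩ := hgen
  have hg0 : ∀ i, g i ≠ 0 := by
    intro i
    have h1 : g 0 ≤ g i := hmono.monotone (Fin.zero_le i)
    omega
  set β : Fin ν → ℕ := betaN S (g 0) g with hβ
  set c : Fin ν → ℕ := fun i => if i = 0 then 1 else β i + 1 with hc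
  set T : Finset (Fin ν → ℕ) := Fintype.piFinset (fun i => Finset.range (c i)) with hT
  set φ : (Fin ν → ℕ) → ℕ := fun lam => ∑ i, lam i * g i with hφ
  have hmemT : ∀ lam : Fin ν → ℕ, lam ∈ T ↔ (lam 0 = 0 ∧ ∀ i, lam i ≤ β i) := by
    intro lam
    rw [hT, Fintype.mem_piFinset]
    simp only [Finset.mem_range]
    constructor
    · intro h
      have h0 : lam 0 = 0 := by have := h 0; simp [hc] at this; omega
      refine ⟨h0, fun i => ?_⟩
      by_cases hi : i = 0
      · subst hi; omega
      · have := h i; simp [hc, hi] at this; omega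
    · rintro ⟨h0, hle⟩ i
      by_cases hi : i = 0
      · subst hi; simp [hc, h0]
      · simp [hc, hi]; exact hle i
  have hTcard : T.card = ∏ i ∈ Finset.univ.erase 0, (β i + 1) := by
    rw [hT, Fintype.card_piFinset]
    have h1 : ∏ i, (Finset.range (c i)).card = ∏ i, c i := by simp
    rw [h1, ← Finset.mul_prod_erase _ c (Finset.mem_univ 0)]
    have hc0 : c 0 = 1 := by simp [hc]
    rw [hc0, one_mul]
    exact Finset.prod_congr rfl fun i hi => by simp [hc, Finset.ne_of_mem_erase hi]
  have hBeq : Bset S (g 0) g = ↑(T.image φ) := by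
    ext s
    simp only [Bset, Set.mem_setOf_eq, Finset.coe_image, Set.mem_image, Finset.mem_coe]
    constructor
    · rintro ⟨lam, h0, hle, hsum⟩
      exact ⟨lam, (hmemT lam).2 ⟨h0, fun i => hle i⟩, hsum⟩
    · rintro ⟨lam, hmem, rfl⟩
      obtain ⟨h0, hle⟩ := (hmemT lam).1 hmem
      exact ⟨lam, h0, hle, rfl⟩
  have hApsubB : AperySet S (g 0) ⊆ Bset S (g 0) g := by
    intro s hs
    obtain ⟨lam, h0, hle, hrep, _⟩ := lemmaA hS hgen hg0 hmpos hmul hs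
    exact ⟨lam, h0, hle, hrep⟩
  have hmS : g 0 ∈ S := gen_mem hgen 0
  have hApcard : (AperySet S (g 0)).ncard = g 0 := apery_ncard hS hmpos hmS
  constructor
  · intro hAB
    set β' : Fin ν → ℕ := fun i => if i = 0 then 0 else β i with hβ'
    have hβ'le : ∀ i, β' i ≤ β i := fun i => by
      by_cases hi : i = 0 <;> simp [hβ', hi]
    have hβ'0 : β' 0 = 0 := by simp [hβ']
    set M : ℕ := φ β' with hM
    have hMB : M ∈ Bset S (g 0) g := ⟨β', hβ'0, hβ'le, rfl⟩
    have hMAp : InApery S (g 0) M := by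
      have : M ∈ AperySet S (g 0) := by rw [hAB]; exact hMB
      exact this
    have hMmax : ∑ i, β' i = ordS S M := by
      obtain ⟨lam, h0, hle, hrep, hmax⟩ := lemmaA hS hgen hg0 hmpos hmul hMAp
      have h1 : ∑ i, β' i ≤ ordS S M := sum_le_ordS hgen hg0 β'
      have h2 : ordS S M ≤ ∑ i, β' i := by
        rw [← hmax]
        refine Finset.sum_le_sum fun i _ => ?_
        by_cases hi : i = 0
        · subst hi; simp [hβ', h0]
        · simp [hβ', hi]; exact hle i
      omega
    have hsub : ∀ tau : Fin ν → ℕ, (∀ i, tau i ≤ β' i) → ordS S (φ tau) = ∑ i, tau i :=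
      fun tau h => subsum_ord hgen hg0 (rfl : φ β' = M) hMmax h
    have key : ∀ lam mu : Fin ν → ℕ, lam ∈ T → mu ∈ T → φ lam = φ mu →
        ∀ i, ¬ (lam i < mu i) := by
      intro lam mu hlamT hmuT hφeq i hlt
      obtain ⟨hl0, hlle⟩ := (hmemT lam).1 hlamT
      obtain ⟨hmu0, hmule⟩ := (hmemT mu).1 hmuT
      have hi0 : i ≠ 0 := by rintro rfl; omega
      have hlβ' : ∀ k, lam k ≤ β' k := fun k => by
        by_cases hk : k = 0
        · subst hk; simp [hβ', hl0]
        · simp [hβ', hk]; exact hlle k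
      have hmβ' : ∀ k, mu k ≤ β' k := fun k => by
        by_cases hk : k = 0
        · subst hk; simp [hβ', hmu0]
        · simp [hβ', hk]; exact hmule k
      have hordl := hsub lam hlβ'
      have hordm := hsub mu hmβ'
      have hsumeq : ∑ k, lam k = ∑ k, mu k := by rw [← hordl, ← hordm, hφeq]
      set d : ℕ := β i - lam i with hd
      set ρ : Fin ν → ℕ := fun k => if k = i then β i else lam k with hρ
      set σ : Fin ν → ℕ := fun k => if k = i then mu i + d else mu k with hσ
      have hρβ' : ∀ k, ρ k ≤ β' k := fun k => by
        by_cases hk : k = i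
        · subst hk; simp [hρ, hβ', hi0]
        · simp [hρ, hk]; exact hlβ' k
      have hordρ := hsub ρ hρβ'
      -- φ σ = φ ρ
      have hβid : β i = lam i + d := by
        have := hlle i; omega
      have e1 : φ lam = lam i * g i + ∑ k ∈ Finset.univ.erase i, lam k * g k :=
        (Finset.add_sum_erase _ (fun k => lam k * g k) (Finset.mem_univ i)).symm
      have e2 : φ mu = mu i * g i + ∑ k ∈ Finset.univ.erase i, mu k * g k :=
        (Finset.add_sum_erase _ (fun k => mu k * g k) (Finset.mem_univ i)).symm
      have e3 : φ ρ = β i * g i + ∑ k ∈ Finset.univ.erase i, lam k * g k := by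
        show ∑ k, ρ k * g k = _
        rw [← Finset.add_sum_erase _ (fun k => ρ k * g k) (Finset.mem_univ i)]
        congr 1
        · simp [hρ]
        · exact Finset.sum_congr rfl fun k hk => by
            simp [hρ, Finset.ne_of_mem_erase hk]
      have e4 : φ σ = (mu i + d) * g i + ∑ k ∈ Finset.univ.erase i, mu k * g k := by
        show ∑ k, σ k * g k = _
        rw [← Finset.add_sum_erase _ (fun k => σ k * g k) (Finset.mem_univ i)]
        congr 1
        · simp [hσ]
        · exact Finset.sum_congr rfl fun k hk => by
            simp [hσ, Finset.ne_of_mem_erase hk]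
      have p1 : β i * g i = lam i * g i + d * g i := by rw [hβid, Nat.add_mul]
      have p2 : (mu i + d) * g i = mu i * g i + d * g i := Nat.add_mul _ _ _
      have hφσρ : φ σ = φ ρ := by omega
      -- sum of σ
      have s1 : ∑ k, lam k = lam i + ∑ k ∈ Finset.univ.erase i, lam k :=
        (Finset.add_sum_erase _ lam (Finset.mem_univ i)).symm
      have s2 : ∑ k, mu k = mu i + ∑ k ∈ Finset.univ.erase i, mu k :=
        (Finset.add_sum_erase _ mu (Finset.mem_univ i)).symm
      have s3 : ∑ k, ρ k = β i + ∑ k ∈ Finset.univ.erase i, lam k := by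
        rw [← Finset.add_sum_erase _ ρ (Finset.mem_univ i)]
        congr 1
        · simp [hρ]
        · exact Finset.sum_congr rfl fun k hk => by
            simp [hρ, Finset.ne_of_mem_erase hk]
      have s4 : ∑ k, σ k = (mu i + d) + ∑ k ∈ Finset.univ.erase i, mu k := by
        rw [← Finset.add_sum_erase _ σ (Finset.mem_univ i)]
        congr 1
        · simp [hσ]
        · exact Finset.sum_congr rfl fun k hk => by
            simp [hσ, Finset.ne_of_mem_erase hk]
      have hsumσ : ∑ k, σ k = ordS S (φ ρ) := by rw [hordρ]; omega
      have hσrep : ∑ k, σ k * g k = φ ρ := hφσρ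
      have htB : φ ρ ∈ Bset S (g 0) g := by
        refine ⟨ρ, ?_, fun k => le_trans (hρβ' k) (hβ'le k), rfl⟩
        simp [hρ, Ne.symm hi0, hl0]
      have htAp : InApery S (g 0) (φ ρ) := by
        have : φ ρ ∈ AperySet S (g 0) := by rw [hAB]; exact htB
        exact this
      have hcoord := maxRep_coord_le_beta hS hgen hg0 hmpos hmul htAp hσrep hsumσ i
      have hσi : σ i = mu i + d := by simp [hσ]
      rw [← hβ] at hcoord
      omega
    have hinj : Set.InjOn φ ↑T := by
      intro lam hl mu hm hφeq
      funext i
      have h1 := key lam mu hl hm hφeq i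
      have h2 := key mu lam hm hl hφeq.symm i
      omega
    have hcard : (AperySet S (g 0)).ncard = T.card := by
      rw [hAB, hBeq, Set.ncard_coe_finset, Finset.card_image_of_injOn hinj]
    rw [← hApcard, hcard, hTcard]
  · intro hprod
    have hfin : (Bset S (g 0) g).Finite := by
      rw [hBeq]; exact (T.image φ).finite_toSet
    have hle : (Bset S (g 0) g).ncard ≤ (AperySet S (g 0)).ncard := by
      rw [hBeq, Set.ncard_coe_finset, hApcard, hprod, ← hTcard]
      exact Finset.card_image_le
    exact Set.eq_of_subset_of_ncard_le hApsubB hle hfin
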